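/- Let λ>0, c>0, t>0 and (x₀,y₀)∈ℝ². For every r with 0 < r < ct − √(x₀²+y₀²), the function F(r) = (λ/(2πc)) e^{−λt} ∬_{{(x,y): x²+y²≤r²}} e^{(λ/c)√(c²t²−(x−x₀)²−(y−y₀)²)} / √(c²t²−(x−x₀)²−(y−y₀)²) dx dy (the absolutely continuous part of P{R(t)≤r}) is differentiable at r with derivative f_R(r,t) = (λ/(2πc)) r e^{−λt} ∫₀^{2π} e^{(λ/c)√(A(θ))} / √(A(θ)) dθ, where A(θ) = c²t² − r² − x₀² − y₀² + 2r(x₀cosθ + y₀sinθ). -/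

import Mathlib

open MeasureTheory Real


lemma pn_norm (ρ θ : ℝ) : (ρ * Real.cos θ) ^ 2 + (ρ * Real.sin θ) ^ 2 = ρ ^ 2 := by
  have h := Real.sin_sq_add_cos_sq θ
  nlinarith [h]

lemma pn_disc_deriv (g : ℝ × ℝ → ℝ) (r r₂ M : ℝ) (hr : 0 < r) (hrr₂ : r < r₂)
    (hg_meas : Measurable g)
    (hM : ∀ p : ℝ × ℝ, p.1 ^ 2 + p.2 ^ 2 ≤ r₂ ^ 2 → ‖g p‖ ≤ M)
    (hg_cont : ∀ p : ℝ × ℝ, p.1 ^ 2 + p.2 ^ 2 ≤ r₂ ^ 2 → ContinuousAt g p) :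
    HasDerivAt (fun s : ℝ => ∫ p in {q : ℝ × ℝ | q.1 ^ 2 + q.2 ^ 2 ≤ s ^ 2}, g p)
      (r * ∫ θ in (0:ℝ)..(2 * π), g (r * Real.cos θ, r * Real.sin θ)) r := by
  have hr₂0 : 0 < r₂ := hr.trans hrr₂
  have hM0 : 0 ≤ M := le_trans (norm_nonneg _) (hM (0, 0) (by norm_num; positivity))
  set H : ℝ → ℝ := fun ρ => ∫ θ in (-π)..π, g (ρ * Real.cos θ, ρ * Real.sin θ) with hHdef
  -- continuity of H on Ioo (-r₂) r₂
  have hHcontAt : ∀ ρ₀ ∈ Set.Ioo (-r₂) r₂, ContinuousAt H ρ₀ := by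
    intro ρ₀ hρ₀
    apply intervalIntegral.continuousAt_of_dominated_interval (bound := fun _ => M)
    · filter_upwards with ρ
      exact (hg_meas.comp (by fun_prop)).aestronglyMeasurable
    · filter_upwards [Ioo_mem_nhds hρ₀.1 hρ₀.2] with ρ hρ
      filter_upwards with θ _
      apply hM
      rw [pn_norm]
      nlinarith [hρ.1, hρ.2]
    · exact intervalIntegrable_const
    · filter_upwards with θ _
      have h1 : ContinuousAt (fun ρ : ℝ => ((ρ * Real.cos θ, ρ * Real.sin θ) : ℝ × ℝ)) ρ₀ := by
        fun_prop
      exact (hg_cont _ (by rw [pn_norm]; nlinarith [hρ₀.1, hρ₀.2])).comp h1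
  have hK : ∀ ρ ∈ Set.Ioo (-r₂) r₂, ContinuousAt (fun u : ℝ => u * H u) ρ := fun ρ hρ =>
    continuousAt_id.mul (hHcontAt ρ hρ)
  have hrmem : r ∈ Set.Ioo (-r₂) r₂ := ⟨by linarith, hrr₂⟩
  -- FTC
  have hKey : HasDerivAt (fun s : ℝ => ∫ u in (0:ℝ)..s, u * H u) (r * H r) r := by
    apply intervalIntegral.integral_hasDerivAt_right
    · apply ContinuousOn.intervalIntegrable
      intro u hu
      rw [Set.uIcc_of_le hr.le] at hu
      exact (hK u ⟨by linarith [hu.1], lt_of_le_of_lt hu.2 hrr₂⟩).continuousWithinAt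
    · exact ContinuousAt.stronglyMeasurableAtFilter isOpen_Ioo hK r hrmem
    · exact hK r hrmem
  -- change of variables for each s in (0, r₂)
  have hXeq : ∀ s : ℝ, 0 < s → s < r₂ →
      (∫ p in {q : ℝ × ℝ | q.1 ^ 2 + q.2 ^ 2 ≤ s ^ 2}, g p) = ∫ u in (0:ℝ)..s, u * H u := by
    intro s hs0 hs2
    have hDmeas : MeasurableSet {q : ℝ × ℝ | q.1 ^ 2 + q.2 ^ 2 ≤ s ^ 2} := by
      apply measurableSet_le (by fun_prop) measurable_const
    rw [← integral_indicator hDmeas, ← integral_comp_polarCoord_symm]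
    have htarget : polarCoord.target = Set.Ioi (0:ℝ) ×ˢ Set.Ioo (-π) π := rfl
    have hmeas_t : MeasurableSet polarCoord.target := by
      rw [htarget]; exact measurableSet_Ioi.prod measurableSet_Ioo
    have step1 : (∫ p in polarCoord.target,
          p.1 • ({q : ℝ × ℝ | q.1 ^ 2 + q.2 ^ 2 ≤ s ^ 2}.indicator g) (polarCoord.symm p))
        = ∫ p in polarCoord.target,
            ({q : ℝ × ℝ | q.1 ≤ s}.indicator
              (fun q : ℝ × ℝ => q.1 * g (q.1 * Real.cos q.2, q.1 * Real.sin q.2))) p := by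
      apply setIntegral_congr_fun hmeas_t
      intro p hp
      rw [htarget] at hp
      have hp1 : 0 < p.1 := hp.1
      simp only [polarCoord_symm_apply]
      by_cases hps : p.1 ≤ s
      · have hmem1 : ((p.1 * Real.cos p.2, p.1 * Real.sin p.2) : ℝ × ℝ) ∈
            {q : ℝ × ℝ | q.1 ^ 2 + q.2 ^ 2 ≤ s ^ 2} := by
          simp only [Set.mem_setOf_eq, pn_norm]
          nlinarith
        have hmem2 : p ∈ {q : ℝ × ℝ | q.1 ≤ s} := hps
        rw [Set.indicator_of_mem hmem1, Set.indicator_of_mem hmem2, smul_eq_mul]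
      · have hmem1 : ((p.1 * Real.cos p.2, p.1 * Real.sin p.2) : ℝ × ℝ) ∉
            {q : ℝ × ℝ | q.1 ^ 2 + q.2 ^ 2 ≤ s ^ 2} := by
          simp only [Set.mem_setOf_eq, pn_norm]
          push_neg at hps ⊢
          nlinarith
        have hmem2 : p ∉ {q : ℝ × ℝ | q.1 ≤ s} := hps
        rw [Set.indicator_of_notMem hmem1, Set.indicator_of_notMem hmem2, smul_zero]
    rw [step1, setIntegral_indicator (by apply measurableSet_le <;> fun_prop)]
    have hset : polarCoord.target ∩ {q : ℝ × ℝ | q.1 ≤ s} = Set.Ioc 0 s ×ˢ Set.Ioo (-π) π := by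
      rw [htarget]
      ext ⟨a, b⟩
      simp only [Set.mem_inter_iff, Set.mem_prod, Set.mem_Ioi, Set.mem_Ioo, Set.mem_setOf_eq,
        Set.mem_Ioc]
      tauto
    rw [hset]
    have hInt : IntegrableOn
        (fun p : ℝ × ℝ => p.1 * g (p.1 * Real.cos p.2, p.1 * Real.sin p.2))
        (Set.Ioc 0 s ×ˢ Set.Ioo (-π) π) volume := by
      have hsm : MeasurableSet (Set.Ioc (0:ℝ) s ×ˢ Set.Ioo (-π) π) :=
        measurableSet_Ioc.prod measurableSet_Ioo
      apply Integrable.mono' (g := fun _ => s * M)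
      · refine integrableOn_const (ne_of_lt ?_)
        rw [show (volume : Measure (ℝ × ℝ)) = (volume : Measure ℝ).prod volume from rfl,
          Measure.prod_prod, Real.volume_Ioc, Real.volume_Ioo]
        exact ENNReal.mul_lt_top ENNReal.ofReal_lt_top ENNReal.ofReal_lt_top
      · exact (measurable_fst.mul (hg_meas.comp (by fun_prop))).aestronglyMeasurable
      · filter_upwards [ae_restrict_mem hsm] with p hp
        have hp1 : 0 < p.1 := hp.1.1
        have hgb : ‖g (p.1 * Real.cos p.2, p.1 * Real.sin p.2)‖ ≤ M := by
          apply hM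
          rw [pn_norm]
          nlinarith [hp.1.2]
        rw [norm_mul, Real.norm_eq_abs p.1, abs_of_pos hp1]
        have : p.1 ≤ s := hp.1.2
        nlinarith [norm_nonneg (g (p.1 * Real.cos p.2, p.1 * Real.sin p.2))]
    rw [show (volume : Measure (ℝ × ℝ)) = (volume : Measure ℝ).prod volume from rfl,
      setIntegral_prod _ hInt]
    rw [intervalIntegral.integral_of_le hs0.le]
    apply setIntegral_congr_fun measurableSet_Ioc
    intro x _
    simp only
    rw [MeasureTheory.integral_const_mul]
    congr 1
    show _ = (∫ θ in (-π)..π, g (x * Real.cos θ, x * Real.sin θ))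
    rw [intervalIntegral.integral_of_le (by linarith [Real.pi_pos] : -π ≤ π),
      MeasureTheory.integral_Ioc_eq_integral_Ioo]
  -- assemble
  have hEv : (fun s : ℝ => ∫ p in {q : ℝ × ℝ | q.1 ^ 2 + q.2 ^ 2 ≤ s ^ 2}, g p)
      =ᶠ[nhds r] (fun s : ℝ => ∫ u in (0:ℝ)..s, u * H u) := by
    filter_upwards [Ioo_mem_nhds hr hrr₂] with s hs
    exact hXeq s hs.1 hs.2
  have hfinal := hKey.congr_of_eventuallyEq hEv
  have hper : Function.Periodic (fun θ => g (r * Real.cos θ, r * Real.sin θ)) (2 * π) := by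
    intro θ
    simp [Real.cos_add_two_pi, Real.sin_add_two_pi]
  have hHr : H r = ∫ θ in (0:ℝ)..(2 * π), g (r * Real.cos θ, r * Real.sin θ) := by
    have h := hper.intervalIntegral_add_eq (-π) 0
    rw [show -π + 2 * π = π by ring, zero_add] at h
    exact h
  rwa [hHr] at hfinal

set_option maxHeartbeats 1000000 in
/-- Theorem 2.1, first part: the absolutely continuous component of
`P{R(t) ≤ r}` for a planar random flight started at `(x₀, y₀)` is differentiable
in `r`, with derivative the radial density `f_R(r,t)`. -/
theorem planar_random_flight_radial_density
    (lam c t x₀ y₀ : ℝ) (hlam : 0 < lam) (hc : 0 < c) (ht : 0 < t)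
    (r : ℝ) (hr : 0 < r) (hr' : r < c * t - Real.sqrt (x₀ ^ 2 + y₀ ^ 2)) :
    HasDerivAt
      (fun s : ℝ => lam / (2 * π * c) * Real.exp (-lam * t) *
        ∫ p in {q : ℝ × ℝ | q.1 ^ 2 + q.2 ^ 2 ≤ s ^ 2},
          Real.exp (lam / c *
              Real.sqrt (c ^ 2 * t ^ 2 - (p.1 - x₀) ^ 2 - (p.2 - y₀) ^ 2)) /
            Real.sqrt (c ^ 2 * t ^ 2 - (p.1 - x₀) ^ 2 - (p.2 - y₀) ^ 2))
      (lam / (2 * π * c) * r * Real.exp (-lam * t) *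
        ∫ θ in (0:ℝ)..(2 * π),
          Real.exp (lam / c * Real.sqrt (c ^ 2 * t ^ 2 - r ^ 2 - x₀ ^ 2 - y₀ ^ 2 +
              2 * r * (x₀ * Real.cos θ + y₀ * Real.sin θ))) /
            Real.sqrt (c ^ 2 * t ^ 2 - r ^ 2 - x₀ ^ 2 - y₀ ^ 2 +
              2 * r * (x₀ * Real.cos θ + y₀ * Real.sin θ)))
      r := by
  have hΓ0 : 0 ≤ Real.sqrt (x₀ ^ 2 + y₀ ^ 2) := Real.sqrt_nonneg _
  set Γ := Real.sqrt (x₀ ^ 2 + y₀ ^ 2) with hΓdef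
  have hΓsq : Γ ^ 2 = x₀ ^ 2 + y₀ ^ 2 := Real.sq_sqrt (by positivity)
  set r₂ : ℝ := (r + (c * t - Γ)) / 2 with hr₂def
  have hrr₂ : r < r₂ := by rw [hr₂def]; linarith
  have hr₂ct : r₂ + Γ < c * t := by rw [hr₂def]; linarith
  have hr₂0 : 0 < r₂ := hr.trans hrr₂
  set δ : ℝ := c ^ 2 * t ^ 2 - (r₂ + Γ) ^ 2 with hδdef
  have hδ0 : 0 < δ := by rw [hδdef]; nlinarith
  set g : ℝ × ℝ → ℝ := fun p =>
    Real.exp (lam / c *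
        Real.sqrt (c ^ 2 * t ^ 2 - (p.1 - x₀) ^ 2 - (p.2 - y₀) ^ 2)) /
      Real.sqrt (c ^ 2 * t ^ 2 - (p.1 - x₀) ^ 2 - (p.2 - y₀) ^ 2) with hgdef
  have hA_lb : ∀ p : ℝ × ℝ, p.1 ^ 2 + p.2 ^ 2 ≤ r₂ ^ 2 →
      δ ≤ c ^ 2 * t ^ 2 - (p.1 - x₀) ^ 2 - (p.2 - y₀) ^ 2 := by
    intro p hp
    have hprod : (r₂ * Γ) ^ 2 = r₂ ^ 2 * (x₀ ^ 2 + y₀ ^ 2) := by rw [mul_pow, hΓsq]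
    have h1 : (p.1 * x₀ + p.2 * y₀) ^ 2 ≤ (r₂ * Γ) ^ 2 := by
      nlinarith [sq_nonneg (p.1 * y₀ - p.2 * x₀),
        mul_le_mul_of_nonneg_right hp (by positivity : (0:ℝ) ≤ x₀ ^ 2 + y₀ ^ 2)]
    have h2 : -(r₂ * Γ) ≤ p.1 * x₀ + p.2 * y₀ := by
      nlinarith [mul_nonneg hr₂0.le hΓ0, sq_nonneg (p.1 * x₀ + p.2 * y₀ + r₂ * Γ)]
    have hmain : (p.1 - x₀) ^ 2 + (p.2 - y₀) ^ 2 ≤ (r₂ + Γ) ^ 2 := by nlinarith [hp, hΓsq]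
    rw [hδdef]; linarith
  have hg_meas : Measurable g := by
    simp only [hgdef]; fun_prop
  have hgM : ∀ p : ℝ × ℝ, p.1 ^ 2 + p.2 ^ 2 ≤ r₂ ^ 2 →
      ‖g p‖ ≤ Real.exp (lam / c * (c * t)) / Real.sqrt δ := by
    intro p hp
    have hAp := hA_lb p hp
    have hA_ub : c ^ 2 * t ^ 2 - (p.1 - x₀) ^ 2 - (p.2 - y₀) ^ 2 ≤ (c * t) ^ 2 := by
      nlinarith [sq_nonneg (p.1 - x₀), sq_nonneg (p.2 - y₀)]
    have h1 : Real.sqrt (c ^ 2 * t ^ 2 - (p.1 - x₀) ^ 2 - (p.2 - y₀) ^ 2) ≤ c * t :=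
      (Real.sqrt_le_sqrt hA_ub).trans (le_of_eq (Real.sqrt_sq (by positivity)))
    have h2 : Real.sqrt δ ≤ Real.sqrt (c ^ 2 * t ^ 2 - (p.1 - x₀) ^ 2 - (p.2 - y₀) ^ 2) :=
      Real.sqrt_le_sqrt hAp
    have h3 : 0 < Real.sqrt δ := Real.sqrt_pos.2 hδ0
    have hgnn : 0 ≤ g p := by
      simp only [hgdef]; positivity
    rw [Real.norm_eq_abs, abs_of_nonneg hgnn]
    simp only [hgdef]
    exact div_le_div₀ (Real.exp_pos _).le
      (Real.exp_le_exp.2 (mul_le_mul_of_nonneg_left h1 (by positivity))) h3 h2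
  have hg_cont : ∀ p : ℝ × ℝ, p.1 ^ 2 + p.2 ^ 2 ≤ r₂ ^ 2 → ContinuousAt g p := by
    intro p hp
    have hApos : 0 < c ^ 2 * t ^ 2 - (p.1 - x₀) ^ 2 - (p.2 - y₀) ^ 2 :=
      lt_of_lt_of_le hδ0 (hA_lb p hp)
    have hc1 : ContinuousAt
        (fun q : ℝ × ℝ => Real.sqrt (c ^ 2 * t ^ 2 - (q.1 - x₀) ^ 2 - (q.2 - y₀) ^ 2)) p := by
      fun_prop
    have hc2 : ContinuousAt
        (fun q : ℝ × ℝ => Real.exp (lam / c *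
          Real.sqrt (c ^ 2 * t ^ 2 - (q.1 - x₀) ^ 2 - (q.2 - y₀) ^ 2))) p := by
      fun_prop
    simp only [hgdef]
    exact hc2.div hc1 (Real.sqrt_pos.2 hApos).ne'
  have key := pn_disc_deriv g r r₂ (Real.exp (lam / c * (c * t)) / Real.sqrt δ)
    hr hrr₂ hg_meas hgM hg_cont
  have key2 := key.const_mul (lam / (2 * π * c) * Real.exp (-lam * t))
  refine key2.congr_deriv ?_
  have hint_eq : (∫ θ in (0:ℝ)..(2 * π), g (r * Real.cos θ, r * Real.sin θ))
      = ∫ θ in (0:ℝ)..(2 * π),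
          Real.exp (lam / c * Real.sqrt (c ^ 2 * t ^ 2 - r ^ 2 - x₀ ^ 2 - y₀ ^ 2 +
              2 * r * (x₀ * Real.cos θ + y₀ * Real.sin θ))) /
            Real.sqrt (c ^ 2 * t ^ 2 - r ^ 2 - x₀ ^ 2 - y₀ ^ 2 +
              2 * r * (x₀ * Real.cos θ + y₀ * Real.sin θ)) := by
    apply intervalIntegral.integral_congr
    intro θ _
    have hAeq : c ^ 2 * t ^ 2 - (r * Real.cos θ - x₀) ^ 2 - (r * Real.sin θ - y₀) ^ 2
        = c ^ 2 * t ^ 2 - r ^ 2 - x₀ ^ 2 - y₀ ^ 2 +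
            2 * r * (x₀ * Real.cos θ + y₀ * Real.sin θ) := by
      linear_combination (-(r ^ 2)) * Real.sin_sq_add_cos_sq θ
    simp only [hgdef, hAeq]
  rw [hint_eq]
  ring
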